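/- Let t ≥ 2 and let m₀, m₁, …, m_{t−2} be positive integers. Suppose that for each 0 ≤ i ≤ t−3 we are given a finite sequence w_i whose entries all lie in {i, i+1}, containing exactly m_i entries equal to i and exactly m_{i+1} entries equal to i+1, and whose first entry is i. Then there exists exactly one permitted sequence γ of parameters (m₀+m₁+⋯+m_{t−2}, t) such that for every 0 ≤ i ≤ t−3, the subsequence of γ consisting of those entries equal to i or i+1 is exactly w_i. -/

import Mathlib

open List

namespace PermittedAux

/-- the step relation -/
abbrev R (a b : ℕ) : Prop := b ≤ a + 1

/-- Insert the letters `k+1` from the word `u` (over alphabet `{k, k+1}`) into the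
sequence `δ` (over alphabet `{0,…,k}`): each occurrence of `k` in `δ` is followed by the
run of `k+1`'s that follows the corresponding `k` in `u`. -/
def merge (k : ℕ) : List ℕ → List ℕ → List ℕ
  | [], _ => []
  | a :: δ, u =>
    if a = k then
      (k :: u.tail.takeWhile (· == k + 1)) ++ merge k δ (u.tail.dropWhile (· == k + 1))
    else a :: merge k δ u

lemma merge_nil (k : ℕ) (u : List ℕ) : merge k [] u = [] := rfl

lemma merge_cons (k a : ℕ) (δ u : List ℕ) :
    merge k (a :: δ) u =
      if a = k then
        (k :: u.tail.takeWhile (· == k + 1)) ++ merge k δ (u.tail.dropWhile (· == k + 1))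
      else a :: merge k δ u := rfl

lemma chain'_cons_all {c x : ℕ} {l : List ℕ} (h : ∀ y ∈ l, y = c) (hxc : R x c)
    (hcc : R c c) : List.Chain' R (x :: l) := by
  induction l generalizing x with
  | nil => exact List.isChain_singleton _
  | cons y l ih =>
    have hy : y = c := h y (by simp)
    refine List.isChain_cons_cons.mpr ⟨by rw [hy]; exact hxc, ?_⟩
    exact ih (fun z hz => h z (by simp [hz])) (hy ▸ hcc)

lemma takeWhile_append_left (p : ℕ → Bool) :
    ∀ (l l' : List ℕ), (∀ x ∈ l, p x = true) →
      l.takeWhile p ++ l'.takeWhile p = (l ++ l').takeWhile p ∧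
      (l ++ l').dropWhile p = l'.dropWhile p := by
  intro l
  induction l with
  | nil => simp
  | cons a l ih =>
    intro l' h
    have ha : p a = true := h a (by simp)
    have := ih l' (fun x hx => h x (by simp [hx]))
    simp [List.takeWhile_cons, List.dropWhile_cons, ha, this.1, this.2]

lemma merge_spec (k : ℕ) : ∀ (δ u : List ℕ),
    List.Chain' R δ → (∀ x ∈ δ, x ≤ k) →
    (∀ x ∈ u, x = k ∨ x = k + 1) →
    u.count k = δ.count k →
    (u = [] ∨ u.head? = some k) →
    (merge k δ u).filter (fun x => !(x == k + 1)) = δ ∧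
    (merge k δ u).filter (fun x => x == k || x == k + 1) = u ∧
    List.Chain' R (merge k δ u) ∧
    (∀ x ∈ merge k δ u, x ≤ k + 1) ∧
    (merge k δ u).head? = δ.head? ∧
    (merge k δ u).length = δ.length + u.count (k + 1) := by
  intro δ
  induction δ with
  | nil =>
    intro u _ _ _ hcount hhead
    have hu : u = [] := by
      rcases hhead with h | h
      · exact h
      · exfalso
        cases u with
        | nil => simp at h
        | cons a v =>
          simp only [List.head?_cons, Option.some.injEq] at h
          subst h
          simp [List.count_cons] at hcount
    subst hu
    simp [merge_nil, List.Chain', List.isChain_nil]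
  | cons a δ ih =>
    intro u hchain hle halph hcount hhead
    have hchain' : List.Chain' R δ := hchain.tail
    have hle' : ∀ x ∈ δ, x ≤ k := fun x hx => hle x (by simp [hx])
    by_cases hak : a = k
    · subst hak
      -- u is nonempty with head a
      have hune : u ≠ [] := by
        intro h; subst h; simp [List.count_cons] at hcount
      obtain ⟨b, v, rfl⟩ : ∃ b v, u = b :: v := by
        cases u with
        | nil => exact absurd rfl hune
        | cons b v => exact ⟨b, v, rfl⟩
      obtain rfl : a = b := by
        rcases hhead with h | h
        · simp at h
        · have : b = a := by simpa using h
          omega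
      set run := v.takeWhile (· == a + 1) with hrun_def
      set v' := v.dropWhile (· == a + 1) with hv'_def
      have hv : run ++ v' = v := List.takeWhile_append_dropWhile
      have hrun : ∀ x ∈ run, x = a + 1 := by
        intro x hx
        have := List.mem_takeWhile_imp hx
        simpa using this
      have hv'mem : ∀ x ∈ v', x ∈ a :: v := by
        intro x hx
        have : x ∈ v := (List.dropWhile_sublist _).mem hx
        simp [this]
      have hv'alph : ∀ x ∈ v', x = a ∨ x = a + 1 := fun x hx => halph x (hv'mem x hx)
      have hv'head : v' = [] ∨ v'.head? = some a := by
        cases hv'' : v' with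
        | nil => exact Or.inl rfl
        | cons c v'' =>
          right
          have hc1 : (c == a + 1) = false := by
            have := List.head?_dropWhile_not (· == a + 1) v
            rw [← hv'_def, hv'', List.head?_cons] at this
            exact this
          have hc : c = a ∨ c = a + 1 := hv'alph c (by rw [hv'']; simp)
          have : c = a := by
            rcases hc with h | h
            · exact h
            · simp [h] at hc1
          simp [this]
      have hcountrun : run.count a = 0 := by
        rw [List.count_eq_zero]
        intro hmem
        have := hrun a hmem
        omega
      have hcountv' : v'.count a = δ.count a := by
        have h1 : (a :: v).count a = δ.count a + 1 := by
          rw [hcount]; simp [List.count_cons]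
        have h2 : (a :: v).count a = v.count a + 1 := by simp [List.count_cons]
        have h3 : v.count a = run.count a + v'.count a := by
          rw [← hv, List.count_append]
        omega
      obtain ⟨Ha, Hb, Hc, Hd, He, Hf⟩ := ih v' hchain' hle' hv'alph hcountv' hv'head
      have hmerge : merge a (a :: δ) (a :: v) = (a :: run) ++ merge a δ v' := by
        rw [merge_cons, if_pos rfl]
        rfl
      rw [hmerge]
      have hrunf1 : run.filter (fun x => !(x == a + 1)) = [] := by
        rw [List.filter_eq_nil_iff]
        intro x hx
        simp [hrun x hx]
      have hrunf2 : run.filter (fun x => x == a || x == a + 1) = run := by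
        rw [List.filter_eq_self]
        intro x hx
        simp [hrun x hx]
      refine ⟨?_, ?_, ?_, ?_, ?_, ?_⟩
      · rw [List.filter_append, List.filter_cons]
        simp only [show ((a : ℕ) == a + 1) = false by simp, Bool.not_false, if_true]
        rw [hrunf1, Ha]
        simp
      · rw [List.filter_append, List.filter_cons]
        simp only [show ((a : ℕ) == a) = true by simp, Bool.true_or, if_true]
        rw [hrunf2, Hb, List.cons_append, hv]
      · rw [List.Chain', List.isChain_append]
        refine ⟨chain'_cons_all hrun (by simp [R]) (by simp [R]), Hc, ?_⟩
        intro x hx y hy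
        have hxmem : x ∈ a :: run := by
          obtain ⟨h, rfl⟩ := List.mem_getLast?_eq_getLast hx
          exact List.getLast_mem h
        have hxge : a ≤ x := by
          rcases List.mem_cons.mp hxmem with h | h
          · omega
          · have := hrun x h; omega
        have hymem : y ∈ δ := by
          rw [He] at hy
          exact List.mem_of_mem_head? hy
        have := hle' y hymem
        simp only [R]; omega
      · intro x hx
        rcases List.mem_append.mp hx with h | h
        · rcases List.mem_cons.mp h with h | h
          · omega
          · have := hrun x h; omega
        · exact Hd x h
      · simp
      · rw [List.length_append, Hf]
        have hrc : run.count (a + 1) = run.length := by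
          rw [List.count_eq_length]
          intro b hb
          exact (hrun b hb).symm
        have : (a :: v).count (a + 1) = run.count (a + 1) + v'.count (a + 1) := by
          rw [List.count_cons, ← hv, List.count_append]
          simp
        simp only [List.length_cons, List.length_append] at *
        omega
    · -- a ≠ k
      have hcount' : u.count k = δ.count k := by
        rw [hcount, List.count_cons]
        simp [show ¬ ((a : ℕ) == k) = true by simp [hak]]
      obtain ⟨Ha, Hb, Hc, Hd, He, Hf⟩ := ih u hchain' hle' halph hcount' hhead
      have hmerge : merge k (a :: δ) u = a :: merge k δ u := by
        rw [merge_cons, if_neg hak]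
      rw [hmerge]
      have halek : a ≤ k := hle a (by simp)
      have hak1 : a ≠ k + 1 := by omega
      refine ⟨?_, ?_, ?_, ?_, ?_, ?_⟩
      · rw [List.filter_cons]
        simp [show ((a : ℕ) == k + 1) = false by simp [hak1], Ha]
      · rw [List.filter_cons]
        simp [show ((a : ℕ) == k) = false by simp [hak],
          show ((a : ℕ) == k + 1) = false by simp [hak1], Hb]
      · refine List.isChain_cons.mpr ⟨?_, Hc⟩
        intro y hy
        rw [He] at hy
        exact (List.isChain_cons.mp hchain).1 y hy
      · intro x hx
        rcases List.mem_cons.mp hx with h | h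
        · omega
        · exact Hd x h
      · simp
      · simp only [List.length_cons, Hf]; omega

/-- head of filter onto `{k, k+1}` is `k`, for a chain not starting with `k+1`. -/
lemma head_pair_filter (k : ℕ) : ∀ (s : List ℕ), List.Chain' R s → (∀ x ∈ s, x ≤ k + 1) →
    s.head? ≠ some (k + 1) →
    s.filter (fun x => x == k || x == k + 1) = [] ∨
    (s.filter (fun x => x == k || x == k + 1)).head? = some k := by
  intro s
  induction s with
  | nil => intro _ _ _; left; simp
  | cons b s ih =>
    intro hchain hle hhead
    have hb1 : b ≠ k + 1 := by
      intro h; exact hhead (by simp [h])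
    by_cases hbk : b = k
    · right
      rw [List.filter_cons]
      simp [hbk]
    · have hfb : ((b == k || b == k + 1)) = false := by
        simp [hbk, hb1]
      rw [List.filter_cons, hfb, if_neg (by simp)]
      apply ih hchain.tail (fun x hx => hle x (by simp [hx]))
      intro h
      cases s with
      | nil => simp at h
      | cons c s' =>
        simp only [List.head?_cons, Option.some.injEq] at h
        have hcb : c ≤ b + 1 := (List.isChain_cons_cons.mp hchain).1
        have hble : b ≤ k + 1 := hle b (by simp)
        omega

/-- removing the top letter `k+1` preserves the chain condition. -/
lemma proj_chain (k : ℕ) : ∀ (γ : List ℕ), List.Chain' R γ → (∀ x ∈ γ, x ≤ k + 1) →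
    List.Chain' R (γ.filter (fun x => !(x == k + 1))) ∧
    ∀ y ∈ (γ.filter (fun x => !(x == k + 1))).head?,
      y ∈ γ.head? ∨ γ.head? = some (k + 1) := by
  intro γ
  induction γ with
  | nil => intro _ _; constructor <;> simp [List.Chain', List.isChain_nil]
  | cons a γ ih =>
    intro hchain hle
    obtain ⟨ihc, ihh⟩ := ih hchain.tail (fun x hx => hle x (by simp [hx]))
    by_cases hak : a = k + 1
    · subst hak
      have hfc : ((k + 1 : ℕ) :: γ).filter (fun x => !(x == k + 1)) =
          γ.filter (fun x => !(x == k + 1)) := by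
        simp [List.filter_cons]
      rw [hfc]
      exact ⟨ihc, fun y _ => Or.inr (by simp)⟩
    · rw [List.filter_cons]
      simp only [show ((a : ℕ) == k + 1) = false by simp [hak], Bool.not_false, if_true]
      constructor
      · refine List.isChain_cons.mpr ⟨?_, ihc⟩
        intro y hy
        rcases ihh y hy with h | h
        · have := (List.isChain_cons.mp hchain).1 y h
          exact this
        · have := (List.isChain_cons.mp hchain).1 (k + 1) (by rw [h]; rfl)
          have hyf : y ∈ γ.filter (fun x => !(x == k + 1)) :=
            List.mem_of_mem_head? hy
          have hy' := List.mem_filter.mp hyf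
          have hyk1 : y ≠ k + 1 := by simpa using hy'.2
          have hyle : y ≤ k + 1 := hle y (by simp [hy'.1])
          simp only [R] at *
          omega
      · intro y hy
        simp only [List.head?_cons, Option.mem_def, Option.some.injEq] at hy ⊢
        exact Or.inl hy

/-- any good sequence is recovered from its two projections by `merge`. -/
lemma reconstruct (k : ℕ) : ∀ (n : ℕ) (γ : List ℕ), γ.length ≤ n → List.Chain' R γ →
    (∀ x ∈ γ, x ≤ k + 1) → γ.head? ≠ some (k + 1) →
    merge k (γ.filter (fun x => !(x == k + 1))) (γ.filter (fun x => x == k || x == k + 1)) = γ := by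
  intro n
  induction n with
  | zero =>
    intro γ hlen _ _ _
    have : γ = [] := by
      cases γ with
      | nil => rfl
      | cons a l => simp at hlen
    subst this
    simp [merge_nil]
  | succ n ih =>
    intro γ hlen hchain hle hhead
    cases γ with
    | nil => simp [merge_nil]
    | cons a γ₂ =>
      have ha1 : a ≠ k + 1 := fun h => hhead (by simp [h])
      have halek : a ≤ k := by
        have := hle a (by simp); omega
      by_cases hak : a = k
      · subst hak
        set r := γ₂.takeWhile (· == a + 1) with hr_def
        set s := γ₂.dropWhile (· == a + 1) with hs_def
        have hrs : r ++ s = γ₂ := List.takeWhile_append_dropWhile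
        have hrall : ∀ x ∈ r, x = a + 1 := by
          intro x hx
          simpa using List.mem_takeWhile_imp hx
        have hschain : List.Chain' R s := hchain.tail.suffix (List.dropWhile_suffix _)
        have hsle : ∀ x ∈ s, x ≤ a + 1 := by
          intro x hx
          exact hle x (by simp [(List.dropWhile_sublist _).mem hx])
        have hshead : s.head? ≠ some (a + 1) := by
          cases hs' : s with
          | nil => simp
          | cons c s' =>
            have := List.head?_dropWhile_not (· == a + 1) γ₂
            rw [← hs_def, hs', List.head?_cons] at this
            simp only [List.head?_cons, ne_eq, Option.some.injEq]
            intro h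
            rw [h] at this
            simp at this
        -- compute the filters
        have hf1 : (a :: γ₂).filter (fun x => !(x == a + 1)) =
            a :: s.filter (fun x => !(x == a + 1)) := by
          rw [List.filter_cons]
          simp only [show ((a : ℕ) == a + 1) = false by simp, Bool.not_false, if_true]
          rw [← hrs, List.filter_append]
          have : r.filter (fun x => !(x == a + 1)) = [] := by
            rw [List.filter_eq_nil_iff]; intro x hx; simp [hrall x hx]
          rw [this]; simp
        have hf2 : (a :: γ₂).filter (fun x => x == a || x == a + 1) =
            a :: (r ++ s.filter (fun x => x == a || x == a + 1)) := by
          rw [List.filter_cons]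
          simp only [show ((a : ℕ) == a) = true by simp, Bool.true_or, if_true]
          rw [← hrs, List.filter_append]
          have : r.filter (fun x => x == a || x == a + 1) = r := by
            rw [List.filter_eq_self]; intro x hx; simp [hrall x hx]
          rw [this]
        rw [hf1, hf2, merge_cons, if_pos rfl]
        have hfs := head_pair_filter a s hschain hsle hshead
        have htw : (r ++ s.filter (fun x => x == a || x == a + 1)).takeWhile (· == a + 1) = r ∧
            (r ++ s.filter (fun x => x == a || x == a + 1)).dropWhile (· == a + 1) =
              s.filter (fun x => x == a || x == a + 1) := by
          have h1 := takeWhile_append_left (· == a + 1) r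
            (s.filter (fun x => x == a || x == a + 1)) (fun x hx => by simp [hrall x hx])
          have h2 : (s.filter (fun x => x == a || x == a + 1)).takeWhile (· == a + 1) = [] ∧
              (s.filter (fun x => x == a || x == a + 1)).dropWhile (· == a + 1) =
                s.filter (fun x => x == a || x == a + 1) := by
            rcases hfs with h | h
            · rw [h]; simp
            · cases hfc : s.filter (fun x => x == a || x == a + 1) with
              | nil => simp
              | cons c l =>
                rw [hfc] at h
                simp only [List.head?_cons, Option.some.injEq] at h
                subst h
                rw [List.takeWhile_cons, List.dropWhile_cons]
                simp
          constructor
          · rw [← h1.1, h2.1, List.append_nil, List.takeWhile_eq_self_iff.mpr]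
            intro x hx; simp [hrall x hx]
          · rw [h1.2, h2.2]
        rw [List.tail_cons, htw.1, htw.2]
        have hslen : s.length ≤ n := by
          have h1 : s.length ≤ γ₂.length := (List.dropWhile_sublist _).length_le
          simp only [List.length_cons] at hlen
          omega
        rw [ih s hslen hschain hsle hshead]
        rw [List.cons_append, hrs]
      · -- a < k
        have hf1 : (a :: γ₂).filter (fun x => !(x == k + 1)) =
            a :: γ₂.filter (fun x => !(x == k + 1)) := by
          rw [List.filter_cons]
          simp [ha1]
        have hf2 : (a :: γ₂).filter (fun x => x == k || x == k + 1) =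
            γ₂.filter (fun x => x == k || x == k + 1) := by
          rw [List.filter_cons]
          simp [hak, ha1]
        rw [hf1, hf2, merge_cons, if_neg hak]
        have hγ₂head : γ₂.head? ≠ some (k + 1) := by
          cases hg : γ₂ with
          | nil => simp
          | cons c l =>
            simp only [List.head?_cons, ne_eq, Option.some.injEq]
            intro h
            have := (List.isChain_cons.mp hchain).1 c (by rw [hg]; rfl)
            simp only [R] at this
            omega
        rw [ih γ₂ (by simp only [List.length_cons] at hlen; omega) hchain.tail
          (fun x hx => hle x (by simp [hx])) hγ₂head]

end PermittedAux

/-- A list `γ` of natural numbers is a *permitted sequence* of parameters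
(`γ.length`, `t`) if its first entry is `0`, each entry exceeds the previous one by at
most `1`, and every entry is at most `t - 2`. -/
def PermittedSeq (t : ℕ) (γ : List ℕ) : Prop :=
  γ.head? = some 0 ∧ List.Chain' (fun a b => b ≤ a + 1) γ ∧ ∀ x ∈ γ, x ≤ t - 2

/-- Given `t ≥ 2`, positive multiplicities `m 0, …, m (t-2)`, and for each `0 ≤ i ≤ t-3`
a word `w i` over the alphabet `{i, i+1}` with exactly `m i` entries equal to `i`,
exactly `m (i+1)` entries equal to `i+1`, and first entry `i`, there is exactly one
permitted sequence of parameters `(m 0 + ⋯ + m (t-2), t)` whose subsequence of entries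
in `{i, i+1}` equals `w i` for every `0 ≤ i ≤ t-3`. -/
theorem existsUnique_permitted_seq (t : ℕ) (ht : 2 ≤ t)
    (m : ℕ → ℕ) (hm : ∀ i, i + 2 ≤ t → 0 < m i)
    (w : ℕ → List ℕ)
    (hw : ∀ i, i + 3 ≤ t →
      (∀ x ∈ w i, x = i ∨ x = i + 1) ∧
      (w i).count i = m i ∧
      (w i).count (i + 1) = m (i + 1) ∧
      (w i).head? = some i) :
    ∃! γ : List ℕ,
      γ.length = ∑ i ∈ Finset.range (t - 1), m i ∧ PermittedSeq t γ ∧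
      ∀ i, i + 3 ≤ t → γ.filter (fun x => x == i || x == i + 1) = w i := by
  induction t, ht using Nat.le_induction generalizing m w with
  | base =>
    refine ⟨List.replicate (m 0) 0, ⟨?_, ⟨?_, ?_, ?_⟩, ?_⟩, ?_⟩
    · simp [Finset.sum_range_one]
    · obtain ⟨n, hn⟩ : ∃ n, m 0 = n + 1 := ⟨m 0 - 1, by have := hm 0 (by omega); omega⟩
      rw [hn]
      simp [List.replicate_succ]
    · exact List.isChain_replicate_of_rel _ (by omega)
    · intro x hx
      simp [List.eq_of_mem_replicate hx]
    · intro i hi; omega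
    · rintro γ' ⟨hlen, ⟨_, _, hle⟩, _⟩
      refine List.eq_replicate_iff.mpr ⟨?_, ?_⟩
      · simpa [Finset.sum_range_one] using hlen
      · intro b hb
        have := hle b hb
        omega
  | succ n hn ih =>
    obtain ⟨k, rfl⟩ : ∃ k, n = k + 2 := ⟨n - 2, by omega⟩
    obtain ⟨halph, hck, hck1, hhd⟩ := hw k (by omega)
    obtain ⟨δ, ⟨hδlen, ⟨hδh, hδc, hδle⟩, hδf⟩, hδuniq⟩ :=
      ih m (fun i hi => hm i (by omega)) w (fun i hi => hw i (by omega))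
    have ekl : k + 2 - 1 = k + 1 := by omega
    rw [ekl] at hδlen
    have hδle' : ∀ x ∈ δ, x ≤ k := by
      intro x hx; have := hδle x hx; omega
    have hδcount : δ.count k = m k := by
      rcases Nat.eq_zero_or_pos k with rfl | hk
      · have hall : ∀ b ∈ δ, (0 : ℕ) = b := fun b hb => by have := hδle' b hb; omega
        rw [List.count_eq_length.mpr hall, hδlen]
        simp [Finset.sum_range_one]
      · obtain ⟨j, rfl⟩ : ∃ j, k = j + 1 := ⟨k - 1, by omega⟩
        obtain ⟨_, _, hwj1, _⟩ := hw j (by omega)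
        calc δ.count (j + 1)
            = (δ.filter (fun x => x == j || x == j + 1)).count (j + 1) :=
              (List.count_filter (by simp)).symm
          _ = m (j + 1) := by rw [hδf j (by omega), hwj1]
    obtain ⟨Ha, Hb, Hc, Hd, He, Hf⟩ :=
      PermittedAux.merge_spec k δ (w k) hδc hδle' halph (by rw [hck, hδcount]) (Or.inr hhd)
    set γ := PermittedAux.merge k δ (w k) with hγdef
    have filter_drop : ∀ (l : List ℕ) (i : ℕ), i + 1 ≤ k →
        l.filter (fun x => x == i || x == i + 1) =
          (l.filter (fun x => !(x == k + 1))).filter (fun x => x == i || x == i + 1) := by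
      intro l i hi
      rw [List.filter_filter]
      apply List.filter_congr
      intro x _
      by_cases h1 : x = i
      · simp [h1, show i ≠ k + 1 by omega]
      · by_cases h2 : x = i + 1
        · simp [h1, h2]; omega
        · simp [h1, h2]
    refine ⟨γ, ⟨?_, ⟨?_, ?_, ?_⟩, ?_⟩, ?_⟩
    · rw [show k + 2 + 1 - 1 = k + 2 by omega, Finset.sum_range_succ, Hf, hδlen, hck1]
    · rw [He]; exact hδh
    · exact Hc
    · intro x hx
      have := Hd x hx
      omega
    · intro i hi
      by_cases hik : i = k
      · subst hik; exact Hb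
      · rw [filter_drop γ i (by omega), Ha]
        exact hδf i (by omega)
    · rintro γ' ⟨hlen', ⟨hh', hc', hle'⟩, hf'⟩
      have hle'' : ∀ x ∈ γ', x ≤ k + 1 := by
        intro x hx; have := hle' x hx; omega
      set δ' := γ'.filter (fun x => !(x == k + 1)) with hδ'def
      have hwk' : γ'.filter (fun x => x == k || x == k + 1) = w k := hf' k (by omega)
      have hcnt : γ'.count (k + 1) = m (k + 1) := by
        calc γ'.count (k + 1)
            = (γ'.filter (fun x => x == k || x == k + 1)).count (k + 1) :=
              (List.count_filter (by simp)).symm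
          _ = m (k + 1) := by rw [hwk', hck1]
      have hlen'' : δ'.length = ∑ i ∈ Finset.range (k + 1), m i := by
        have h1 := List.length_eq_countP_add_countP (fun x => x == k + 1) (l := γ')
        have h2 : List.countP (fun x => x == k + 1) γ' = γ'.count (k + 1) :=
          (List.count_eq_countP).symm
        have h3 : List.countP (fun a => decide ¬((a == k + 1) = true)) γ' = δ'.length := by
          rw [hδ'def, List.countP_eq_length_filter]
          congr 1
          apply List.filter_congr
          intro x _
          by_cases h : x = k + 1 <;> simp [h]
        rw [show k + 2 + 1 - 1 = k + 2 by omega, Finset.sum_range_succ] at hlen'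
        omega
      have hδ'perm : δ'.head? = some 0 ∧ List.Chain' (fun a b => b ≤ a + 1) δ' ∧
          ∀ x ∈ δ', x ≤ k + 2 - 2 := by
        refine ⟨?_, (PermittedAux.proj_chain k γ' hc' hle'').1, ?_⟩
        · cases γ' with
          | nil => simp at hh'
          | cons a rest =>
            have ha : a = 0 := by simpa using hh'
            subst ha
            rw [hδ'def, List.filter_cons]
            simp [show (0 : ℕ) ≠ k + 1 by omega]
        · intro x hx
          obtain ⟨hx1, hx2⟩ := List.mem_filter.mp hx
          have hx3 : x ≠ k + 1 := by simpa using hx2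
          have := hle'' x hx1
          omega
      have hδ'f : ∀ i, i + 3 ≤ k + 2 →
          δ'.filter (fun x => x == i || x == i + 1) = w i := by
        intro i hi
        rw [hδ'def, ← filter_drop γ' i (by omega)]
        exact hf' i (by omega)
      have hδ'eq : δ' = δ := hδuniq δ' ⟨by rw [hlen'', ekl], hδ'perm, hδ'f⟩
      have hrec := PermittedAux.reconstruct k γ'.length γ' le_rfl hc' hle''
        (by rw [hh']; simp)
      rw [← hrec, ← hδ'def, hδ'eq, hwk']
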